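/- Let V be a finite-dimensional vector space over ℝ, let P₁, P₂ : V* → V be skew-symmetric linear maps, and let k₁, …, k_n ∈ V* satisfy P₁(k_i) = 0 for all i. Put S = {x ∈ V : k_i(x) = 0 for all i}, D = span{P₂(k₁), …, P₂(k_n)}, E = D ∩ S, and let W ⊆ S be a subspace with S = E ⊕ W (that is, E ∩ W = 0 and E + W = S). Then for every λ ∈ ℝ, writing P_λ = P₂ + λP₁, one has W ∩ P_λ(W°) = 0. -/
import Mathlib


/-- Pointwise content of the first part of Lemma 2.4: with `S` the common kernel of the
Casimir differentials `kᵢ` of `P₁`, `D` the span of the vector fields `P₂ kᵢ`, `E = D ∩ S`,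
and `W ⊆ S` a complement of `E` in `S`, one has `W ∩ P_λ(W°) = 0` for every `λ`. -/
theorem transversal_inter_pencil_annihilator_eq_bot (V : Type*) [AddCommGroup V] [Module ℝ V]
    [FiniteDimensional ℝ V]
    (P₁ P₂ : Module.Dual ℝ V →ₗ[ℝ] V)
    (hP₁skew : ∀ α β : Module.Dual ℝ V, α (P₁ β) = - β (P₁ α))
    (hP₂skew : ∀ α β : Module.Dual ℝ V, α (P₂ β) = - β (P₂ α))
    (n : ℕ) (k : Fin n → Module.Dual ℝ V) (hk : ∀ i, P₁ (k i) = 0)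
    (S : Submodule ℝ V) (hS : S = ⨅ i, LinearMap.ker (k i))
    (D : Submodule ℝ V) (hD : D = Submodule.span ℝ (Set.range fun i => P₂ (k i)))
    (E : Submodule ℝ V) (hE : E = D ⊓ S)
    (W : Submodule ℝ V) (hWS : W ≤ S) (hEW : E ⊓ W = ⊥) (hEWsup : E ⊔ W = S)
    (lam : ℝ) (v : Module.Dual ℝ V)
    (hv_ann : ∀ w ∈ W, v w = 0) (hv_mem : (P₂ + lam • P₁) v ∈ W) :
    (P₂ + lam • P₁) v = 0 := by
  set P : Module.Dual ℝ V →ₗ[ℝ] V := P₂ + lam • P₁ with hP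
  have hPvS : P v ∈ S := hWS hv_mem
  have hkPv : ∀ i, k i (P v) = 0 := by
    intro i
    have h := hPvS
    rw [hS, Submodule.mem_iInf] at h
    exact h i
  have hvD : ∀ i, v (P₂ (k i)) = 0 := by
    intro i
    have h1 : k i (P v) = -(v (P₂ (k i))) - lam * v (P₁ (k i)) := by
      simp only [hP, LinearMap.add_apply, LinearMap.smul_apply, map_add, map_smul,
        smul_eq_mul]
      rw [hP₂skew (k i) v, hP₁skew (k i) v]
      ring
    rw [hk i] at h1
    simp only [map_zero, mul_zero, sub_zero] at h1
    have h2 := hkPv i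
    rw [h1] at h2
    linarith
  have hvDall : ∀ x ∈ D, v x = 0 := by
    rw [hD]
    intro x hx
    induction hx using Submodule.span_induction with
    | mem y hy => obtain ⟨i, rfl⟩ := hy; exact hvD i
    | zero => simp
    | add y z _ _ hy hz => simp [hy, hz]
    | smul c y _ hy => simp [hy]
  have hvS : ∀ x ∈ S, v x = 0 := by
    intro x hx
    rw [← hEWsup] at hx
    rcases Submodule.mem_sup.mp hx with ⟨e, he, w, hw, rfl⟩
    have heD : e ∈ D := (hE ▸ he).1
    simp [hvDall e heD, hv_ann w hw]
  have hvspan : v ∈ Submodule.span ℝ (Set.range k) := by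
    apply mem_span_of_iInf_ker_le_ker
    intro x hx
    exact hvS x (hS ▸ hx)
  obtain ⟨c, hc⟩ := (Submodule.mem_span_range_iff_exists_fun ℝ).mp hvspan
  have hPvD : P v ∈ D := by
    rw [← hc, hD]
    have : P (∑ i, c i • k i) = ∑ i, c i • P₂ (k i) := by
      rw [map_sum]
      refine Finset.sum_congr rfl fun i _ => ?_
      rw [map_smul]
      simp [hP, hk i]
    rw [this]
    exact Submodule.sum_mem _ fun i _ => Submodule.smul_mem _ _ (Submodule.subset_span ⟨i, rfl⟩)
  have hmem : P v ∈ E ⊓ W := ⟨hE ▸ Submodule.mem_inf.mpr ⟨hPvD, hPvS⟩, hv_mem⟩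
  rw [hEW] at hmem
  exact hmem
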